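/- For the elements θ_{0,d} defined from T_{0,d} by the generating-series relation 1 + Σ_{d≥1} θ_{0,d} s^d = exp((v^{-1}−v) Σ_{d≥1} T_{0,d} s^d), if each T_{0,d} is a primitive-type element with coproduct Δ̃(T_{0,d}) = T_{0,d}⊗1 + κ_{0,d}⊗T_{0,d} in a bialgebra where κ_{0,d}κ_{0,e} = κ_{0,d+e} are grouplike central elements, then Δ̃(θ_{0,d}) = Σ_{l=0}^d θ_{0,l} κ_{0,d−l} ⊗ θ_{0,d−l}. -/

import Mathlib

open TensorProduct Finset

/-- **Coproduct of the elements `θ_{0,d}`.**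
In a (graded, topological) bialgebra whose relevant elements commute, suppose
`κ_{0,d}` are grouplike central elements with `κ_{0,d} κ_{0,e} = κ_{0,d+e}`,
`κ_{0,0} = 1`, and `Δ̃(T_{0,d}) = T_{0,d} ⊗ 1 + κ_{0,d} ⊗ T_{0,d}` for `d ≥ 1`.
Define `θ_{0,d}` by `1 + Σ_{d≥1} θ_{0,d} s^d = exp((v⁻¹ - v) Σ_{d≥1} T_{0,d} s^d)`
(encoded here by the equivalent coefficient recursion, obtained by logarithmic
differentiation: `d θ_d = (v⁻¹ - v) Σ_{k=1}^d k T_k θ_{d-k}` with `θ_0 = 1`).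
Then `Δ̃(θ_{0,d}) = Σ_{l=0}^d θ_{0,l} κ_{0,d-l} ⊗ θ_{0,d-l}`. -/
theorem stmt10 (A : Type*) [CommRing A] [Algebra ℂ A]
    (Δ : A →ₐ[ℂ] A ⊗[ℂ] A) (v : ℂ) (hv : v ≠ 0)
    (κ T θ : ℕ → A)
    (hκmul : ∀ d e : ℕ, κ d * κ e = κ (d + e)) (hκ0 : κ 0 = 1)
    (hκgrp : ∀ d : ℕ, Δ (κ d) = κ d ⊗ₜ[ℂ] κ d)
    (hT : ∀ d : ℕ, 1 ≤ d → Δ (T d) = T d ⊗ₜ[ℂ] 1 + κ d ⊗ₜ[ℂ] T d)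
    (hθ0 : θ 0 = 1)
    (hθrec : ∀ d : ℕ, 1 ≤ d →
      (d : ℂ) • θ d = (v⁻¹ - v) • ∑ k ∈ Finset.Icc 1 d, (k : ℂ) • (T k * θ (d - k))) :
    ∀ d : ℕ, Δ (θ d) =
      ∑ l ∈ Finset.range (d + 1), (θ l * κ (d - l)) ⊗ₜ[ℂ] θ (d - l) := by
  intro d
  induction d using Nat.strong_induction_on with
  | _ d ih =>
  rcases Nat.eq_zero_or_pos d with rfl | hd
  · simp [hθ0, hκ0, Algebra.TensorProduct.one_def]
  have hd' : (d : ℂ) ≠ 0 := Nat.cast_ne_zero.mpr hd.ne'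
  apply smul_right_injective (A ⊗[ℂ] A) hd'
  show (d : ℂ) • Δ (θ d) = (d : ℂ) • _
  set c : ℂ := v⁻¹ - v with hc
  -- Lemma A
  have lemA : ∑ l ∈ range (d + 1), (l : ℂ) • ((θ l * κ (d - l)) ⊗ₜ[ℂ] θ (d - l))
      = c • ∑ k ∈ Icc 1 d, ∑ m ∈ range (d - k + 1),
          (k : ℂ) • ((T k * (θ m * κ (d - k - m))) ⊗ₜ[ℂ] θ (d - k - m)) := by
    have h1 : ∑ l ∈ range (d + 1), (l : ℂ) • ((θ l * κ (d - l)) ⊗ₜ[ℂ] θ (d - l))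
        = ∑ l ∈ Icc 1 d, ∑ k ∈ Icc 1 l,
            c • ((k : ℂ) • ((T k * θ (l - k) * κ (d - l)) ⊗ₜ[ℂ] θ (d - l))) := by
      rw [← Finset.sum_subset (s₁ := Icc 1 d) (s₂ := range (d + 1))
        (by intro x hx; simp only [mem_Icc] at hx; simp only [mem_range]; omega)
        (by intro x hx hx'
            have hx0 : x = 0 := by
              simp only [mem_range] at hx; simp only [mem_Icc, not_and, not_le] at hx'; omega
            simp [hx0])]
      refine Finset.sum_congr rfl ?_
      intro l hl
      simp only [mem_Icc] at hl
      rw [show (l : ℂ) • ((θ l * κ (d - l)) ⊗ₜ[ℂ] θ (d - l))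
          = (((l : ℂ) • θ l) * κ (d - l)) ⊗ₜ[ℂ] θ (d - l) by
          rw [smul_mul_assoc, TensorProduct.smul_tmul']]
      rw [hθrec l hl.1, smul_mul_assoc, Finset.sum_mul, ← TensorProduct.smul_tmul',
        TensorProduct.sum_tmul, Finset.smul_sum]
      refine Finset.sum_congr rfl ?_
      intro k _
      rw [smul_mul_assoc, ← TensorProduct.smul_tmul']
    rw [h1]
    rw [Finset.sum_comm' (t' := Icc 1 d) (s' := fun k => Icc k d)
      (by intro l k; simp only [mem_Icc]; omega)]
    rw [Finset.smul_sum]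
    refine Finset.sum_congr rfl ?_
    intro k hk
    simp only [mem_Icc] at hk
    rw [← Finset.smul_sum, ← Finset.Ico_add_one_right_eq_Icc, Finset.sum_Ico_eq_sum_range]
    rw [show d + 1 - k = d - k + 1 by omega]
    congr 1
    refine Finset.sum_congr rfl ?_
    intro m hm
    simp only [mem_range] at hm
    rw [show k + m - k = m by omega, show d - (k + m) = d - k - m by omega, mul_assoc]
  -- Lemma B
  have lemB : ∑ l ∈ range (d + 1), ((d - l : ℕ) : ℂ) • ((θ l * κ (d - l)) ⊗ₜ[ℂ] θ (d - l))
      = c • ∑ k ∈ Icc 1 d, ∑ m ∈ range (d - k + 1),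
          (k : ℂ) • ((κ k * (θ m * κ (d - k - m))) ⊗ₜ[ℂ] (T k * θ (d - k - m))) := by
    have h1 : ∑ l ∈ range (d + 1), ((d - l : ℕ) : ℂ) • ((θ l * κ (d - l)) ⊗ₜ[ℂ] θ (d - l))
        = ∑ l ∈ range (d + 1), ∑ k ∈ Icc 1 (d - l),
            c • ((k : ℂ) • ((θ l * κ (d - l)) ⊗ₜ[ℂ] (T k * θ (d - l - k)))) := by
      refine Finset.sum_congr rfl ?_
      intro l hl
      simp only [mem_range] at hl
      rcases Nat.eq_zero_or_pos (d - l) with h0 | hpos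
      · simp [h0]
      rw [show ((d - l : ℕ) : ℂ) • ((θ l * κ (d - l)) ⊗ₜ[ℂ] θ (d - l))
          = (θ l * κ (d - l)) ⊗ₜ[ℂ] (((d - l : ℕ) : ℂ) • θ (d - l)) by
          rw [TensorProduct.tmul_smul]]
      rw [hθrec (d - l) hpos, TensorProduct.tmul_smul, TensorProduct.tmul_sum,
        Finset.smul_sum]
      refine Finset.sum_congr rfl ?_
      intro k _
      rw [TensorProduct.tmul_smul]
    rw [h1]
    rw [Finset.sum_comm' (t' := Icc 1 d) (s' := fun k => range (d - k + 1))
      (by intro l k; simp only [mem_Icc, mem_range]; omega)]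
    rw [Finset.smul_sum]
    refine Finset.sum_congr rfl ?_
    intro k hk
    simp only [mem_Icc] at hk
    rw [← Finset.smul_sum]
    congr 1
    refine Finset.sum_congr rfl ?_
    intro l hl
    simp only [mem_range] at hl
    congr 1
    rw [show d - l - k = d - k - l by omega,
      show κ (d - l) = κ k * κ (d - k - l) by rw [hκmul]; congr 1; omega]
    ring_nf
  -- Main computation
  have main : Δ ((d : ℂ) • θ d)
      = c • ∑ k ∈ Icc 1 d, ∑ m ∈ range (d - k + 1),
          ((k : ℂ) • ((T k * (θ m * κ (d - k - m))) ⊗ₜ[ℂ] θ (d - k - m))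
           + (k : ℂ) • ((κ k * (θ m * κ (d - k - m))) ⊗ₜ[ℂ] (T k * θ (d - k - m)))) := by
    rw [hθrec d hd, map_smul, map_sum]
    congr 1
    refine Finset.sum_congr rfl ?_
    intro k hk
    simp only [mem_Icc] at hk
    rw [map_smul, map_mul, hT k hk.1, ih (d - k) (by omega), add_mul, Finset.mul_sum,
      Finset.mul_sum]
    simp only [Algebra.TensorProduct.tmul_mul_tmul, one_mul]
    rw [← Finset.sum_add_distrib, Finset.smul_sum]
    refine Finset.sum_congr rfl ?_
    intro m _
    rw [smul_add]
  calc (d : ℂ) • Δ (θ d) = Δ ((d : ℂ) • θ d) := (map_smul Δ _ _).symm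
    _ = c • ∑ k ∈ Icc 1 d, ∑ m ∈ range (d - k + 1),
          ((k : ℂ) • ((T k * (θ m * κ (d - k - m))) ⊗ₜ[ℂ] θ (d - k - m))
           + (k : ℂ) • ((κ k * (θ m * κ (d - k - m))) ⊗ₜ[ℂ] (T k * θ (d - k - m)))) := main
    _ = (∑ l ∈ range (d + 1), (l : ℂ) • ((θ l * κ (d - l)) ⊗ₜ[ℂ] θ (d - l)))
        + ∑ l ∈ range (d + 1), ((d - l : ℕ) : ℂ) • ((θ l * κ (d - l)) ⊗ₜ[ℂ] θ (d - l)) := by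
        rw [lemA, lemB]
        simp only [Finset.sum_add_distrib, smul_add]
    _ = (d : ℂ) • ∑ l ∈ range (d + 1), (θ l * κ (d - l)) ⊗ₜ[ℂ] θ (d - l) := by
        rw [← Finset.sum_add_distrib, Finset.smul_sum]
        refine Finset.sum_congr rfl ?_
        intro l hl
        simp only [mem_range] at hl
        rw [← add_smul, show (l : ℂ) + ((d - l : ℕ) : ℂ) = (d : ℂ) by
          rw [← Nat.cast_add]; congr 1; omega]
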